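/- arXiv:1804.03002 — 2 statements merged into one kernel-verified Lean document; each statement's English description precedes it below -/
import Mathlib

section
/- For the fractional kernel K(t) = (1/Γ(H+1/2)) [t^{H-1/2} - a ∫_0^t (t-s)^{H-1/2} e^{-as} ds] with Hurst parameter H ∈ (0, 1/2) and a > 0, the kernel K is integrable on (0, ∞), i.e., ∫_0^∞ |K(t)| dt < ∞. -/
open MeasureTheory Set Real
open scoped Interval

private lemma kernelAux_div_le_div {x y c : ℝ} (h : x ≤ y) (hc : 0 < c) : x / c ≤ y / c := by
  have := mul_le_mul_of_nonneg_right h (inv_nonneg.mpr hc.le)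
  simpa [div_eq_mul_inv] using this

private lemma kernelAux_measG (p a : ℝ) :
    StronglyMeasurable (fun t : ℝ => ∫ s in Ioc (0:ℝ) t, (t - s) ^ p * Real.exp (-a * s)) := by
  have hF : Measurable (fun q : ℝ × ℝ => (q.1 - q.2) ^ p * Real.exp (-a * q.2)) :=
    ((measurable_fst.sub measurable_snd).pow_const p).mul ((measurable_snd.const_mul (-a)).exp)
  have hS : MeasurableSet {q : ℝ × ℝ | 0 < q.2 ∧ q.2 ≤ q.1} :=
    (measurableSet_lt measurable_const measurable_snd).inter
      (measurableSet_le measurable_snd measurable_fst)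
  have key : ∀ t : ℝ, (∫ s in Ioc (0:ℝ) t, (t - s) ^ p * Real.exp (-a * s))
      = ∫ s : ℝ, ({q : ℝ × ℝ | 0 < q.2 ∧ q.2 ≤ q.1}.indicator
          (fun q => (q.1 - q.2) ^ p * Real.exp (-a * q.2))) (t, s) := by
    intro t
    rw [← integral_indicator measurableSet_Ioc]
    apply integral_congr_ae
    filter_upwards with s
    by_cases hs : 0 < s ∧ s ≤ t <;>
      simp [Set.indicator_apply, Set.mem_Ioc, Set.mem_setOf_eq, hs]
  simp only [key]
  exact ((hF.indicator hS).stronglyMeasurable).integral_prod_right'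

private lemma kernelAux_intOn_rpow_sub {p : ℝ} (hp : -1 < p) {t : ℝ} (ht : 0 ≤ t) :
    IntegrableOn (fun s : ℝ => (t - s) ^ p) (Ioc 0 t) := by
  have h : IntervalIntegrable (fun s : ℝ => (t - s) ^ p) volume 0 t := by
    have := (intervalIntegral.intervalIntegrable_rpow' (a := t - 0) (b := t - t) hp).comp_sub_left t
    simpa using this
  exact (intervalIntegrable_iff_integrableOn_Ioc_of_le ht).mp h

private lemma kernelAux_integral_rpow_sub {p : ℝ} (hp : -1 < p) {t : ℝ} (ht : 0 ≤ t) :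
    (∫ s in Ioc (0:ℝ) t, (t - s) ^ p) = t ^ (p + 1) / (p + 1) := by
  rw [← intervalIntegral.integral_of_le ht,
    intervalIntegral.integral_comp_sub_left (fun x => x ^ p) t]
  simp only [sub_self, sub_zero]
  rw [integral_rpow (Or.inl hp), Real.zero_rpow (by linarith : p + 1 ≠ 0)]
  ring

private lemma kernelAux_intOn_prod {p : ℝ} (hp : -1 < p) (a : ℝ) (ha : 0 < a) {t : ℝ}
    (ht : 0 ≤ t) :
    IntegrableOn (fun s : ℝ => (t - s) ^ p * Real.exp (-a * s)) (Ioc 0 t) := by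
  apply Integrable.mono' (kernelAux_intOn_rpow_sub hp ht)
  · exact (((measurable_const.sub measurable_id).pow_const p).mul
      ((measurable_id.const_mul (-a)).exp)).aestronglyMeasurable
  · refine (ae_restrict_iff' measurableSet_Ioc).2 (ae_of_all _ fun s hs => ?_)
    have h1 : (0:ℝ) ≤ (t - s) ^ p := Real.rpow_nonneg (by linarith [hs.2]) p
    have h2 : Real.exp (-a * s) ≤ 1 := by
      rw [Real.exp_le_one_iff]
      nlinarith [hs.1]
    rw [Real.norm_eq_abs, abs_mul, abs_of_nonneg h1, abs_of_pos (Real.exp_pos _)]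
    nlinarith [Real.exp_pos (-a * s)]

private lemma kernelAux_integral_exp_Ioc (a : ℝ) (ha : a ≠ 0) {t : ℝ} (ht : 0 ≤ t) :
    (∫ s in Ioc (0:ℝ) t, Real.exp (-a * s)) = (1 - Real.exp (-a * t)) / a := by
  rw [← intervalIntegral.integral_of_le ht]
  rw [intervalIntegral.integral_comp_mul_left (fun x => Real.exp x)
    (by simpa using ha : (-a) ≠ 0)]
  rw [integral_exp]
  simp only [smul_eq_mul, mul_zero, Real.exp_zero]
  rw [div_eq_mul_inv, inv_neg]
  ring

private lemma kernelAux_rpow_diff_le {p : ℝ} (hp1 : -1 < p) (hp0 : p < 0) {b c : ℝ}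
    (hb : 0 < b) (hbc : b ≤ c) :
    b ^ p - c ^ p ≤ (-p) * ((c - b) * b ^ (p - 1)) := by
  have hnotmem : (0:ℝ) ∉ [[b, c]] := by
    rw [Set.uIcc_of_le hbc, Set.mem_Icc]
    push_neg
    intro h; linarith
  have h1 : (∫ x in b..c, x ^ (p - 1)) = (c ^ p - b ^ p) / p := by
    rw [integral_rpow (Or.inr ⟨by intro h; apply hp0.ne; linarith, hnotmem⟩)]
    norm_num
  have h2 : (∫ x in b..c, x ^ (p - 1)) ≤ (c - b) * b ^ (p - 1) := by
    have hmono := intervalIntegral.integral_mono_on hbc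
      (intervalIntegral.intervalIntegrable_rpow (Or.inr hnotmem))
      (intervalIntegrable_const (μ := MeasureTheory.volume) (c := b ^ (p - 1)))
      (fun x hx => Real.rpow_le_rpow_of_nonpos hb hx.1 (by linarith : p - 1 ≤ 0))
    simpa [smul_eq_mul] using hmono
  have h3 : b ^ p - c ^ p = (-p) * ∫ x in b..c, x ^ (p - 1) := by
    rw [h1, mul_div_assoc', neg_mul, neg_div, mul_div_cancel_left₀ _ hp0.ne]
    ring
  rw [h3]
  exact mul_le_mul_of_nonneg_left h2 (by linarith)

private lemma kernelAux_key_id {p : ℝ} (hp1 : -1 < p) {a t : ℝ} (ha : 0 < a) (ht : 0 < t) :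
    t ^ p - a * ∫ s in Ioc (0:ℝ) t, (t - s) ^ p * Real.exp (-a * s)
      = t ^ p * Real.exp (-a * t)
        + a * ∫ s in Ioc (0:ℝ) t, (t ^ p - (t - s) ^ p) * Real.exp (-a * s) := by
  have hexp : IntegrableOn (fun s : ℝ => t ^ p * Real.exp (-a * s)) (Ioc 0 t) := by
    apply Continuous.integrableOn_Ioc
    exact continuous_const.mul
      ((continuous_const.mul continuous_id).rexp : Continuous fun s : ℝ => Real.exp (-a * s))
  have h1 : (∫ s in Ioc (0:ℝ) t, (t ^ p - (t - s) ^ p) * Real.exp (-a * s))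
      = t ^ p * (∫ s in Ioc (0:ℝ) t, Real.exp (-a * s))
        - ∫ s in Ioc (0:ℝ) t, (t - s) ^ p * Real.exp (-a * s) := by
    simp only [sub_mul]
    rw [integral_sub hexp (kernelAux_intOn_prod hp1 a ha ht.le), MeasureTheory.integral_const_mul]
  rw [h1, kernelAux_integral_exp_Ioc a ha.ne' ht.le]
  field_simp
  ring

private lemma kernelAux_intOn_id_exp {a : ℝ} (ha : 0 < a) :
    IntegrableOn (fun s : ℝ => s * Real.exp (-a * s)) (Ioi 0) := by
  apply Integrable.mono' (((exp_neg_integrableOn_Ioi 0 (half_pos ha)).const_mul (2 / a)))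
  · exact (measurable_id.mul ((measurable_id.const_mul (-a)).exp)).aestronglyMeasurable
  · refine (ae_restrict_iff' measurableSet_Ioi).2 (ae_of_all _ fun s hs => ?_)
    have hs0 : (0:ℝ) < s := hs
    have h1 : s ≤ 2 / a * Real.exp (a / 2 * s) := by
      have := Real.add_one_le_exp (a / 2 * s)
      rw [div_mul_eq_mul_div, le_div_iff₀ ha]
      nlinarith [Real.exp_pos (a / 2 * s)]
    have h2 : s * Real.exp (-a * s) ≤ 2 / a * Real.exp (-(a / 2) * s) := by
      calc s * Real.exp (-a * s) ≤ (2 / a * Real.exp (a / 2 * s)) * Real.exp (-a * s) :=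
            mul_le_mul_of_nonneg_right h1 (Real.exp_pos _).le
        _ = 2 / a * Real.exp (-(a / 2) * s) := by
            rw [mul_assoc, ← Real.exp_add]; ring_nf
    rw [Real.norm_eq_abs, abs_of_nonneg (by positivity)]
    exact h2

set_option maxHeartbeats 1000000 in
/-- The fractional kernel `K(t) = (1/Γ(H+1/2)) [t^{H-1/2} - a ∫_0^t (t-s)^{H-1/2} e^{-as} ds]`
with `H ∈ (0, 1/2)` and `a > 0` is integrable on `(0, ∞)`. -/
theorem kernel_integrable (H a : ℝ) (hH : H ∈ Set.Ioo (0 : ℝ) (1/2)) (ha : 0 < a)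
    (K : ℝ → ℝ)
    (hK : ∀ t : ℝ, 0 < t → K t = (1 / Real.Gamma (H + 1/2)) *
      (t ^ (H - 1/2) - a * ∫ s in Set.Ioc (0:ℝ) t, (t - s) ^ (H - 1/2) * Real.exp (-a * s))) :
    MeasureTheory.IntegrableOn K (Set.Ioi (0 : ℝ)) := by
  obtain ⟨hH0, hH1⟩ := hH
  set p : ℝ := H - 1/2 with hpdef
  have hp1 : (-1:ℝ) < p := by rw [hpdef]; linarith
  have hp0 : p < 0 := by rw [hpdef]; linarith
  have hp1' : (0:ℝ) < p + 1 := by linarith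
  set c : ℝ := 1 / Real.Gamma (H + 1/2) with hc
  set G : ℝ → ℝ := fun t => ∫ s in Ioc (0:ℝ) t, (t - s) ^ p * Real.exp (-a * s) with hGdef
  have hKF : ∀ t : ℝ, t ∈ Ioi (0:ℝ) → K t = c * (t ^ p - a * G t) := fun t ht => hK t ht
  have hFmeas : StronglyMeasurable (fun t : ℝ => c * (t ^ p - a * G t)) := by
    apply StronglyMeasurable.mul stronglyMeasurable_const
    exact ((measurable_id.pow_const p).stronglyMeasurable).sub
      (stronglyMeasurable_const.mul (kernelAux_measG p a))
  have hKmeas : ∀ S : Set ℝ, MeasurableSet S → S ⊆ Ioi (0:ℝ) →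
      AEStronglyMeasurable K (volume.restrict S) := by
    intro S hS hsub
    refine (hFmeas.aestronglyMeasurable).congr ?_
    exact (ae_restrict_iff' hS).2 (ae_of_all _ fun t ht => (hKF t (hsub ht)).symm)
  -- bound on |G t|
  have hGbound : ∀ t : ℝ, 0 < t → |G t| ≤ t ^ (p + 1) / (p + 1) := by
    intro t ht
    have habs : |G t| ≤ ∫ s in Ioc (0:ℝ) t, ‖(t - s) ^ p * Real.exp (-a * s)‖ :=
      norm_integral_le_integral_norm (μ := volume.restrict (Ioc (0:ℝ) t))
        (fun s : ℝ => (t - s) ^ p * Real.exp (-a * s))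
    have hmono : (∫ s in Ioc (0:ℝ) t, ‖(t - s) ^ p * Real.exp (-a * s)‖)
        ≤ ∫ s in Ioc (0:ℝ) t, (t - s) ^ p := by
      refine setIntegral_mono_on ((kernelAux_intOn_prod hp1 a ha ht.le).abs)
        (kernelAux_intOn_rpow_sub hp1 ht.le) measurableSet_Ioc (fun s hs => ?_)
      have hts : (0:ℝ) ≤ t - s := by linarith [hs.2]
      have h1 : (0:ℝ) ≤ (t - s) ^ p := Real.rpow_nonneg hts p
      have h2 : Real.exp (-a * s) ≤ 1 := by
        rw [Real.exp_le_one_iff]; nlinarith [hs.1]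
      rw [Real.norm_eq_abs, abs_mul, abs_of_nonneg h1, abs_of_pos (Real.exp_pos _)]
      nlinarith [Real.exp_pos (-a * s)]
    calc |G t| ≤ ∫ s in Ioc (0:ℝ) t, ‖(t - s) ^ p * Real.exp (-a * s)‖ := habs
      _ ≤ ∫ s in Ioc (0:ℝ) t, (t - s) ^ p := hmono
      _ = t ^ (p + 1) / (p + 1) := kernelAux_integral_rpow_sub hp1 ht.le
  -- part 1 : integrability on Ioc 0 1
  have part1 : IntegrableOn K (Ioc (0:ℝ) 1) := by
    have hrint : IntegrableOn (fun t : ℝ => t ^ p) (Ioc (0:ℝ) 1) :=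
      (intervalIntegrable_iff_integrableOn_Ioc_of_le zero_le_one).mp
        (intervalIntegral.intervalIntegrable_rpow' hp1)
    refine Integrable.mono' ((hrint.const_mul (|c| * (1 + a / (p + 1)))))
      (hKmeas _ measurableSet_Ioc (fun x hx => hx.1)) ?_
    refine (ae_restrict_iff' measurableSet_Ioc).2 (ae_of_all _ fun t ht => ?_)
    have ht0 : (0:ℝ) < t := ht.1
    have ht1 : t ≤ 1 := ht.2
    have htp : (0:ℝ) ≤ t ^ p := Real.rpow_nonneg ht0.le p
    have hG1 : a * |G t| ≤ a / (p + 1) * t ^ p := by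
      have := hGbound t ht0
      have h2 : t ^ (p + 1) ≤ t ^ p := by
        rw [Real.rpow_add ht0, Real.rpow_one]
        nlinarith
      calc a * |G t| ≤ a * (t ^ (p + 1) / (p + 1)) :=
            mul_le_mul_of_nonneg_left this ha.le
        _ = (a / (p + 1)) * t ^ (p + 1) := by ring
        _ ≤ (a / (p + 1)) * t ^ p := mul_le_mul_of_nonneg_left h2 (div_nonneg ha.le hp1'.le)
    rw [Real.norm_eq_abs, hKF t ht0, abs_mul]
    calc |c| * |t ^ p - a * G t| ≤ |c| * (t ^ p + a * |G t|) := by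
          apply mul_le_mul_of_nonneg_left _ (abs_nonneg c)
          calc |t ^ p - a * G t| ≤ |t ^ p| + |a * G t| := abs_sub _ _
            _ = t ^ p + a * |G t| := by
                rw [abs_of_nonneg htp, abs_mul, abs_of_pos ha]
      _ ≤ |c| * (t ^ p + a / (p + 1) * t ^ p) :=
          mul_le_mul_of_nonneg_left (by linarith [hG1]) (abs_nonneg c)
      _ = |c| * (1 + a / (p + 1)) * t ^ p := by ring
  -- constant for the tail
  set Ca : ℝ := ∫ s in Ioi (0:ℝ), s * Real.exp (-a * s) with hCa
  -- part 2 : integrability on Ioi 1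
  have part2 : IntegrableOn K (Ioi (1:ℝ)) := by
    have hexpint : IntegrableOn (fun t : ℝ => Real.exp (-(a/4) * t)) (Ioi 1) :=
      exp_neg_integrableOn_Ioi 1 (by positivity)
    have hrint : IntegrableOn (fun t : ℝ => t ^ (p - 1)) (Ioi 1) :=
      integrableOn_Ioi_rpow_of_lt (by linarith) one_pos
    have hbint : IntegrableOn (fun t : ℝ =>
        |c| * ((1 + 4 / (p + 1)) * Real.exp (-(a/4) * t)
          + (a * (-p) * Ca / 2 ^ (p - 1)) * t ^ (p - 1))) (Ioi 1) :=
      (((hexpint.const_mul _).add (hrint.const_mul _)).const_mul _)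
    refine Integrable.mono' hbint
      (hKmeas _ measurableSet_Ioi (fun x hx => Set.mem_Ioi.mpr (lt_trans one_pos hx))) ?_
    refine (ae_restrict_iff' measurableSet_Ioi).2 (ae_of_all _ fun t ht1 => ?_)
    have ht1 : (1:ℝ) < t := ht1
    have ht0 : (0:ℝ) < t := lt_trans one_pos ht1
    have ht2 : (0:ℝ) < t / 2 := by linarith
    -- the splitting of the error integral
    set f : ℝ → ℝ := fun s => ((t - s) ^ p - t ^ p) * Real.exp (-a * s) with hfdef
    have hexpc : IntegrableOn (fun s : ℝ => t ^ p * Real.exp (-a * s)) (Ioc 0 t) := by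
      apply Continuous.integrableOn_Ioc
      exact continuous_const.mul
        ((continuous_const.mul continuous_id).rexp : Continuous fun s : ℝ => Real.exp (-a * s))
    have hfint : IntegrableOn f (Ioc 0 t) := by
      have : IntegrableOn (fun s : ℝ => (t - s) ^ p * Real.exp (-a * s) -
          t ^ p * Real.exp (-a * s)) (Ioc 0 t) :=
        (kernelAux_intOn_prod hp1 a ha ht0.le).sub hexpc
      apply this.congr_fun _ measurableSet_Ioc
      intro s _; rw [hfdef]; ring
    -- identity
    have hid := kernelAux_key_id hp1 (p := p) ha ht0
    have hEid : (∫ s in Ioc (0:ℝ) t, (t ^ p - (t - s) ^ p) * Real.exp (-a * s))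
        = - ∫ s in Ioc (0:ℝ) t, f s := by
      rw [← integral_neg]
      apply setIntegral_congr_fun measurableSet_Ioc
      intro s _; rw [hfdef]; ring
    -- split the integral of f
    have hdisj : Disjoint (Ioc (0:ℝ) (t/2)) (Ioo (t/2) t) := by
      rw [Set.disjoint_left]
      intro x hx1 hx2
      exact absurd hx1.2 (not_le.mpr hx2.1)
    have hsub1 : Ioc (0:ℝ) (t/2) ⊆ Ioc 0 t := fun x hx => ⟨hx.1, le_trans hx.2 (by linarith)⟩
    have hsub2 : Ioo (t/2) t ⊆ Ioc (0:ℝ) t := fun x hx => ⟨lt_trans ht2 hx.1, hx.2.le⟩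
    have hsplit : (∫ s in Ioc (0:ℝ) t, f s)
        = (∫ s in Ioc (0:ℝ) (t/2), f s) + ∫ s in Ioo (t/2) t, f s := by
      rw [integral_Ioc_eq_integral_Ioo,
        ← Set.Ioc_union_Ioo_eq_Ioo ht2.le (by linarith : t/2 < t),
        setIntegral_union hdisj measurableSet_Ioo
          (hfint.mono_set hsub1) (hfint.mono_set hsub2)]
    -- bound on the first piece
    have hI1 : (∫ s in Ioc (0:ℝ) (t/2), f s) ≤ ((-p) * (t/2) ^ (p - 1)) * Ca := by
      have hb1 : ∀ s ∈ Ioc (0:ℝ) (t/2),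
          f s ≤ ((-p) * (t/2) ^ (p - 1)) * (s * Real.exp (-a * s)) := by
        intro s hs
        have hs0 : (0:ℝ) < s := hs.1
        have hts : t/2 ≤ t - s := by linarith [hs.2]
        have h1 : (t - s) ^ p - t ^ p ≤ (-p) * (s * (t - s) ^ (p - 1)) := by
          have h := kernelAux_rpow_diff_le hp1 hp0 (lt_of_lt_of_le ht2 hts)
            (by linarith : t - s ≤ t)
          have heq : t - (t - s) = s := by ring
          rw [heq] at h
          exact h
        have h2 : (t - s) ^ (p - 1) ≤ (t/2) ^ (p - 1) :=
          Real.rpow_le_rpow_of_nonpos ht2 hts (by linarith)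
        have h3 : (t - s) ^ p - t ^ p ≤ (-p) * (s * (t/2) ^ (p - 1)) := by
          refine le_trans h1 ?_
          have hm : s * (t - s) ^ (p - 1) ≤ s * (t/2) ^ (p - 1) :=
            mul_le_mul_of_nonneg_left h2 hs0.le
          exact mul_le_mul_of_nonneg_left hm (by linarith)
        calc f s = ((t - s) ^ p - t ^ p) * Real.exp (-a * s) := rfl
          _ ≤ ((-p) * (s * (t/2) ^ (p - 1))) * Real.exp (-a * s) :=
              mul_le_mul_of_nonneg_right h3 (Real.exp_pos _).le
          _ = ((-p) * (t/2) ^ (p - 1)) * (s * Real.exp (-a * s)) := by ring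
      have hg1int : IntegrableOn
          (fun s : ℝ => ((-p) * (t/2) ^ (p - 1)) * (s * Real.exp (-a * s))) (Ioc 0 (t/2)) :=
        ((kernelAux_intOn_id_exp ha).mono_set Set.Ioc_subset_Ioi_self).const_mul _
      have hstep1 : (∫ s in Ioc (0:ℝ) (t/2), f s)
          ≤ ∫ s in Ioc (0:ℝ) (t/2), ((-p) * (t/2) ^ (p - 1)) * (s * Real.exp (-a * s)) :=
        setIntegral_mono_on (hfint.mono_set hsub1) hg1int measurableSet_Ioc hb1
      have hstep3 : (∫ s in Ioc (0:ℝ) (t/2), s * Real.exp (-a * s)) ≤ Ca := by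
        apply setIntegral_mono_set (kernelAux_intOn_id_exp ha)
        · refine (ae_restrict_iff' measurableSet_Ioi).2 (ae_of_all _ fun s hs => ?_)
          exact mul_nonneg (le_of_lt hs) (Real.exp_pos _).le
        · exact Filter.Eventually.of_forall (fun x hx => Set.Ioc_subset_Ioi_self hx)
      have hcnn : 0 ≤ (-p) * (t/2) ^ (p - 1) :=
        mul_nonneg (by linarith) (Real.rpow_nonneg ht2.le _)
      calc (∫ s in Ioc (0:ℝ) (t/2), f s)
          ≤ ∫ s in Ioc (0:ℝ) (t/2), ((-p) * (t/2) ^ (p - 1)) * (s * Real.exp (-a * s)) := hstep1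
        _ = ((-p) * (t/2) ^ (p - 1)) * ∫ s in Ioc (0:ℝ) (t/2), s * Real.exp (-a * s) :=
            MeasureTheory.integral_const_mul _ _
        _ ≤ ((-p) * (t/2) ^ (p - 1)) * Ca := mul_le_mul_of_nonneg_left hstep3 hcnn
    -- bound on the second piece
    have hI2 : (∫ s in Ioo (t/2) t, f s)
        ≤ Real.exp (-a * (t/2)) * ((t/2) ^ (p + 1) / (p + 1)) := by
      have hb2 : ∀ s ∈ Ioo (t/2) t, f s ≤ (t - s) ^ p * Real.exp (-a * (t/2)) := by
        intro s hs
        have htp : (0:ℝ) ≤ t ^ p := Real.rpow_nonneg ht0.le p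
        have h1 : (t - s) ^ p - t ^ p ≤ (t - s) ^ p := by linarith
        have h2 : Real.exp (-a * s) ≤ Real.exp (-a * (t/2)) := by
          apply Real.exp_le_exp.mpr
          nlinarith [hs.1]
        calc f s ≤ (t - s) ^ p * Real.exp (-a * s) :=
              mul_le_mul_of_nonneg_right h1 (Real.exp_pos _).le
          _ ≤ (t - s) ^ p * Real.exp (-a * (t/2)) :=
              mul_le_mul_of_nonneg_left h2 (Real.rpow_nonneg (by linarith [hs.2]) p)
      have hg2int : IntegrableOn (fun s : ℝ => (t - s) ^ p * Real.exp (-a * (t/2)))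
          (Ioo (t/2) t) :=
        ((kernelAux_intOn_rpow_sub hp1 ht0.le).mono_set hsub2).mul_const _
      have hstep : (∫ s in Ioo (t/2) t, f s)
          ≤ ∫ s in Ioo (t/2) t, (t - s) ^ p * Real.exp (-a * (t/2)) :=
        setIntegral_mono_on (hfint.mono_set hsub2) hg2int measurableSet_Ioo hb2
      have hval : (∫ s in Ioo (t/2) t, (t - s) ^ p * Real.exp (-a * (t/2)))
          = Real.exp (-a * (t/2)) * ((t/2) ^ (p + 1) / (p + 1)) := by
        rw [MeasureTheory.integral_mul_const, ← integral_Ioc_eq_integral_Ioo]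
        have hv : (∫ s in Ioc (t/2) t, (t - s) ^ p) = (t/2) ^ (p + 1) / (p + 1) := by
          rw [← intervalIntegral.integral_of_le (by linarith : t/2 ≤ t),
            intervalIntegral.integral_comp_sub_left (fun x => x ^ p) t]
          simp only [sub_self]
          rw [show t - t/2 = t/2 by ring]
          rw [integral_rpow (Or.inl hp1), Real.zero_rpow (by linarith : p + 1 ≠ 0)]
          ring
        rw [hv]; ring
      exact le_trans hstep (le_of_eq hval)
    -- nonnegativity of the error integral
    have hfnn : 0 ≤ ∫ s in Ioc (0:ℝ) t, f s := by
      rw [integral_Ioc_eq_integral_Ioo]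
      apply setIntegral_nonneg measurableSet_Ioo
      intro s hs
      have h1 : t ^ p ≤ (t - s) ^ p :=
        Real.rpow_le_rpow_of_nonpos (by linarith [hs.2]) (by linarith [hs.1]) hp0.le
      exact mul_nonneg (by linarith) (Real.exp_pos _).le
    -- the key estimate
    have hKabs : |t ^ p - a * G t|
        ≤ t ^ p * Real.exp (-a * t) + a * ∫ s in Ioc (0:ℝ) t, f s := by
      have heq : t ^ p - a * G t
          = t ^ p * Real.exp (-a * t) - a * ∫ s in Ioc (0:ℝ) t, f s := by
        have hid := kernelAux_key_id hp1 (a := a) (t := t) ha ht0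
        have hEid : (∫ s in Ioc (0:ℝ) t, (t ^ p - (t - s) ^ p) * Real.exp (-a * s))
            = - ∫ s in Ioc (0:ℝ) t, f s := by
          rw [← integral_neg]
          apply setIntegral_congr_fun measurableSet_Ioc
          intro s _
          simp only [hfdef]
          ring
        rw [hEid] at hid
        have : G t = ∫ s in Ioc (0:ℝ) t, (t - s) ^ p * Real.exp (-a * s) := rfl
        rw [this]
        linarith [hid]
      rw [heq]
      have h1 : 0 ≤ t ^ p * Real.exp (-a * t) :=
        mul_nonneg (Real.rpow_nonneg ht0.le p) (Real.exp_pos _).le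
      have h2 : 0 ≤ a * ∫ s in Ioc (0:ℝ) t, f s := mul_nonneg ha.le hfnn
      rw [abs_le]
      constructor <;> linarith
    -- numeric estimates
    have hexp1 : t ^ p * Real.exp (-a * t) ≤ Real.exp (-(a/4) * t) := by
      have h1 : t ^ p ≤ 1 := Real.rpow_le_one_of_one_le_of_nonpos ht1.le hp0.le
      have h2 : Real.exp (-a * t) ≤ Real.exp (-(a/4) * t) := by
        apply Real.exp_le_exp.mpr
        nlinarith
      nlinarith [Real.exp_pos (-a * t), Real.exp_pos (-(a/4) * t)]
    have hdiv : (t/2) ^ (p - 1) = t ^ (p - 1) / 2 ^ (p - 1) :=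
      Real.div_rpow ht0.le (by norm_num) _
    have hI2' : a * (Real.exp (-a * (t/2)) * ((t/2) ^ (p + 1) / (p + 1)))
        ≤ 4 / (p + 1) * Real.exp (-(a/4) * t) := by
      have hA : (t/2) ^ (p + 1) ≤ t := by
        calc (t/2) ^ (p + 1) ≤ t ^ (p + 1) :=
              Real.rpow_le_rpow ht2.le (by linarith) (by linarith)
          _ ≤ t ^ (1:ℝ) := Real.rpow_le_rpow_of_exponent_le ht1.le (by rw [hpdef]; linarith)
          _ = t := Real.rpow_one t
      have hB : Real.exp (-a * (t/2)) = Real.exp (-(a/4) * t) * Real.exp (-(a/4) * t) := by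
        rw [← Real.exp_add]; ring_nf
      have hC : t * Real.exp (-(a/4) * t) ≤ 4 / a := by
        have h := Real.add_one_le_exp ((a/4) * t)
        have ht' : t ≤ 4 / a * Real.exp ((a/4) * t) := by
          rw [div_mul_eq_mul_div, le_div_iff₀ ha]
          nlinarith
        calc t * Real.exp (-(a/4) * t)
            ≤ (4 / a * Real.exp ((a/4) * t)) * Real.exp (-(a/4) * t) :=
              mul_le_mul_of_nonneg_right ht' (Real.exp_pos _).le
          _ = 4 / a := by
              rw [mul_assoc, ← Real.exp_add,
                show (a/4) * t + -(a/4) * t = 0 by ring, Real.exp_zero, mul_one]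
      have hfs : a / (p + 1) * (4 / a) = 4 / (p + 1) := by
        field_simp
      calc a * (Real.exp (-a * (t/2)) * ((t/2) ^ (p + 1) / (p + 1)))
          ≤ a * (Real.exp (-a * (t/2)) * (t / (p + 1))) := by
            apply mul_le_mul_of_nonneg_left _ ha.le
            apply mul_le_mul_of_nonneg_left _ (Real.exp_pos _).le
            exact kernelAux_div_le_div hA hp1'
        _ = a / (p + 1) * ((t * Real.exp (-(a/4) * t)) * Real.exp (-(a/4) * t)) := by
            rw [hB]; ring
        _ ≤ a / (p + 1) * ((4 / a) * Real.exp (-(a/4) * t)) := by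
            apply mul_le_mul_of_nonneg_left _ (div_nonneg ha.le (by linarith))
            exact mul_le_mul_of_nonneg_right hC (Real.exp_pos _).le
        _ = 4 / (p + 1) * Real.exp (-(a/4) * t) := by
            rw [← mul_assoc, hfs]
    -- put everything together
    have hItot : a * (∫ s in Ioc (0:ℝ) t, f s)
        ≤ 4 / (p + 1) * Real.exp (-(a/4) * t)
          + (a * (-p) * Ca / 2 ^ (p - 1)) * t ^ (p - 1) := by
      have e1 : a * (∫ s in Ioc (0:ℝ) (t/2), f s)
          ≤ (a * (-p) * Ca / 2 ^ (p - 1)) * t ^ (p - 1) := by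
        have h := mul_le_mul_of_nonneg_left hI1 ha.le
        rw [hdiv] at h
        calc a * (∫ s in Ioc (0:ℝ) (t/2), f s)
            ≤ a * ((-p) * (t ^ (p - 1) / 2 ^ (p - 1)) * Ca) := h
          _ = (a * (-p) * Ca / 2 ^ (p - 1)) * t ^ (p - 1) := by ring
      have e2 : a * (∫ s in Ioo (t/2) t, f s) ≤ 4 / (p + 1) * Real.exp (-(a/4) * t) :=
        le_trans (mul_le_mul_of_nonneg_left hI2 ha.le) hI2'
      rw [hsplit, mul_add]
      linarith
    rw [Real.norm_eq_abs, hKF t ht0, abs_mul]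
    have hfinal : |t ^ p - a * G t|
        ≤ (1 + 4 / (p + 1)) * Real.exp (-(a/4) * t)
          + (a * (-p) * Ca / 2 ^ (p - 1)) * t ^ (p - 1) := by
      calc |t ^ p - a * G t|
          ≤ t ^ p * Real.exp (-a * t) + a * ∫ s in Ioc (0:ℝ) t, f s := hKabs
        _ ≤ (1 + 4 / (p + 1)) * Real.exp (-(a/4) * t)
            + (a * (-p) * Ca / 2 ^ (p - 1)) * t ^ (p - 1) := by
            have := hexp1
            linarith [hItot]
    exact mul_le_mul_of_nonneg_left hfinal (abs_nonneg c)
  have : Ioc (0:ℝ) 1 ∪ Ioi 1 = Ioi 0 := Set.Ioc_union_Ioi_eq_Ioi zero_le_one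
  rw [← this]
  exact part1.union part2
end

section
/- For the fractional kernel K(t) = (1/Γ(H+1/2)) [t^{H-1/2} - a ∫_0^t (t-s)^{H-1/2} e^{-as} ds] with H ∈ (0,1), the kernel K is square integrable on (0, ∞): ∫_0^∞ K(t)² dt < ∞. -/
open MeasureTheory Set intervalIntegral

namespace KernelSq

lemma integrableOn_rpow_sub {α : ℝ} (hα : -1 < α) {u t : ℝ} (hut : u ≤ t) :
    IntegrableOn (fun s => (t - s) ^ α) (Ioc u t) := by
  have h := (intervalIntegrable_rpow' (a := 0) (b := t - u) hα).comp_sub_left t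
  simp only [sub_zero, sub_sub_cancel] at h
  exact (intervalIntegrable_iff_integrableOn_Ioc_of_le hut).mp h.symm

lemma integrableOn_rpow_sub_exp {α a : ℝ} (hα : -1 < α) {u t : ℝ}
    (hu : 0 ≤ u) (ha : 0 ≤ a) (hut : u ≤ t) :
    IntegrableOn (fun s => (t - s) ^ α * Real.exp (-a * s)) (Ioc u t) := by
  refine (integrableOn_rpow_sub hα hut).mono' ?_ ?_
  · have : Measurable fun s : ℝ => (t - s) ^ α * Real.exp (-a * s) := by fun_prop
    exact this.aestronglyMeasurable
  · filter_upwards [ae_restrict_mem measurableSet_Ioc] with s hs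
    have h1 : (0:ℝ) ≤ t - s := by linarith [hs.2]
    have h2 : Real.exp (-a * s) ≤ 1 := by
      rw [Real.exp_le_one_iff]
      nlinarith [hs.1, hu]
    rw [Real.norm_eq_abs, abs_mul, abs_of_nonneg (Real.rpow_nonneg h1 α),
      abs_of_nonneg (Real.exp_nonneg _)]
    exact mul_le_of_le_one_right (Real.rpow_nonneg h1 α) h2

lemma integral_exp_Ioc {a : ℝ} (ha : 0 < a) {t : ℝ} (ht : 0 ≤ t) :
    ∫ s in Ioc (0:ℝ) t, Real.exp (-a * s) = (1 - Real.exp (-a * t)) / a := by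
  rw [← intervalIntegral.integral_of_le ht]
  have h := intervalIntegral.integral_comp_mul_left (a := 0) (b := t)
    (fun x => Real.exp x) (c := -a) (by simpa using ha.ne')
  simp only [mul_zero] at h
  rw [h, integral_exp]
  rw [smul_eq_mul, Real.exp_zero, div_eq_mul_inv, inv_neg]
  ring

lemma integral_rpow_sub {α : ℝ} (hα : -1 < α) {u t : ℝ} (hut : u ≤ t) :
    ∫ s in Ioc u t, (t - s) ^ α = (t - u) ^ (α + 1) / (α + 1) := by
  rw [← intervalIntegral.integral_of_le hut]
  have h := intervalIntegral.integral_comp_sub_left (a := u) (b := t)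
    (fun x => x ^ α) t
  simp only [sub_self] at h
  rw [h, integral_rpow (Or.inl hα)]
  rw [Real.zero_rpow (by linarith : α + 1 ≠ 0)]
  ring

lemma integrableOn_const_exp {a c : ℝ} {u t : ℝ} :
    IntegrableOn (fun s => c * Real.exp (-a * s)) (Ioc u t) := by
  apply Continuous.integrableOn_Ioc
  fun_prop

lemma measurable_F (α a : ℝ) :
    Measurable fun t : ℝ => ∫ s in Ioc (0:ℝ) t, (t - s) ^ α * Real.exp (-a * s) := by
  have heq : ∀ t : ℝ, (∫ s in Ioc (0:ℝ) t, (t - s) ^ α * Real.exp (-a * s))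
      = ∫ s, (Ioc (0:ℝ) t).indicator (fun s => (t - s) ^ α * Real.exp (-a * s)) s :=
    fun t => (MeasureTheory.integral_indicator measurableSet_Ioc).symm
  simp_rw [heq]
  have hm : Measurable fun p : ℝ × ℝ =>
      (Ioc (0:ℝ) p.1).indicator (fun s => (p.1 - s) ^ α * Real.exp (-a * s)) p.2 := by
    simp_rw [Set.indicator_apply, Set.mem_Ioc]
    refine Measurable.ite ?_ (by fun_prop) measurable_const
    exact (measurableSet_lt measurable_const measurable_snd).inter
      (measurableSet_le measurable_snd measurable_fst)
  exact hm.stronglyMeasurable.integral_prod_right'.measurable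

lemma mvt_bound {α : ℝ} (hα : α ≤ 1) {t s : ℝ} (hs0 : 0 < s) (hst : s ≤ t / 2) :
    |t ^ α - (t - s) ^ α| ≤ |α| * (t / 2) ^ (α - 1) * s := by
  have h2 : (0:ℝ) < t / 2 := by linarith
  have key := norm_image_sub_le_of_norm_deriv_le_segment'
    (f := fun x : ℝ => x ^ α) (f' := fun x => α * x ^ (α - 1)) (a := t - s) (b := t)
    (C := |α| * (t / 2) ^ (α - 1)) ?_ ?_ t ?_
  · rw [Real.norm_eq_abs] at key
    calc |t ^ α - (t - s) ^ α| ≤ |α| * (t / 2) ^ (α - 1) * (t - (t - s)) := key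
    _ = |α| * (t / 2) ^ (α - 1) * s := by ring_nf
  · intro x hx
    have hx0 : x ≠ 0 := by
      have := hx.1; intro h; rw [h] at this; linarith
    exact (Real.hasDerivAt_rpow_const (Or.inl hx0)).hasDerivWithinAt
  · intro x hx
    have hx2 : t / 2 ≤ x := by linarith [hx.1]
    rw [Real.norm_eq_abs, abs_mul, abs_of_nonneg (Real.rpow_nonneg (by linarith) (α - 1))]
    exact mul_le_mul_of_nonneg_left
      (Real.rpow_le_rpow_of_nonpos h2 hx2 (by linarith)) (abs_nonneg α)
  · exact ⟨by linarith, le_refl t⟩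

lemma integrable_id_exp {a : ℝ} (ha : 0 < a) :
    IntegrableOn (fun s => s * Real.exp (-a * s)) (Ioi (0:ℝ)) := by
  refine ((exp_neg_integrableOn_Ioi 0 (half_pos ha)).const_mul (2 / a)).mono' ?_ ?_
  · have : Measurable fun s : ℝ => s * Real.exp (-a * s) := by fun_prop
    exact this.aestronglyMeasurable
  · filter_upwards [ae_restrict_mem measurableSet_Ioi] with s hs
    have hs0 : (0:ℝ) < s := hs
    have e1 : Real.exp (-a * s) = Real.exp (-(a / 2) * s) * Real.exp (-(a / 2) * s) := by
      rw [← Real.exp_add]; ring_nf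
    have e2 : Real.exp (-(a / 2) * s) * Real.exp ((a / 2) * s) = 1 := by
      rw [← Real.exp_add]; ring_nf; exact Real.exp_zero
    have e3 : a / 2 * s + 1 ≤ Real.exp ((a / 2) * s) := by
      have := Real.add_one_le_exp (a / 2 * s); linarith
    have hep : (0:ℝ) < Real.exp (-(a / 2) * s) := Real.exp_pos _
    have hep2 : (0:ℝ) < Real.exp ((a / 2) * s) := Real.exp_pos _
    rw [Real.norm_eq_abs, abs_of_nonneg (by positivity : (0:ℝ) ≤ s * Real.exp (-a * s))]
    rw [e1, ← mul_assoc]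
    have h4 : s * Real.exp (-(a / 2) * s) ≤ 2 / a := by
      rw [← mul_le_mul_iff_left₀ hep2, mul_assoc, e2, mul_one]
      calc s ≤ 2 / a * (a / 2 * s + 1) := by
              have : 2 / a * (a / 2 * s) = s := by field_simp
              nlinarith [div_pos (by norm_num : (0:ℝ) < 2) ha]
      _ ≤ 2 / a * Real.exp (a / 2 * s) :=
        mul_le_mul_of_nonneg_left e3 (by positivity)
    exact mul_le_mul_of_nonneg_right h4 hep.le

lemma sq_le_exp {x : ℝ} (hx : 0 ≤ x) : x ^ 2 ≤ 4 * Real.exp x := by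
  have h1 : Real.exp x = Real.exp (x / 2) * Real.exp (x / 2) := by
    rw [← Real.exp_add]; ring_nf
  have h2 := Real.add_one_le_exp (x / 2)
  nlinarith [Real.exp_pos (x / 2)]

/-- The key algebraic decomposition. -/
lemma decomposition {α a : ℝ} (hα : -1 < α) (ha : 0 < a) {t : ℝ} (ht : 0 < t) :
    t ^ α - a * ∫ s in Ioc (0:ℝ) t, (t - s) ^ α * Real.exp (-a * s)
      = a * (∫ s in Ioc (0:ℝ) t, (t ^ α - (t - s) ^ α) * Real.exp (-a * s))
        + t ^ α * Real.exp (-a * t) := by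
  have hG : IntegrableOn (fun s => (t - s) ^ α * Real.exp (-a * s)) (Ioc (0:ℝ) t) :=
    integrableOn_rpow_sub_exp hα le_rfl ha.le ht.le
  have hC : IntegrableOn (fun s => t ^ α * Real.exp (-a * s)) (Ioc (0:ℝ) t) :=
    integrableOn_const_exp
  have hsub : (∫ s in Ioc (0:ℝ) t, (t ^ α - (t - s) ^ α) * Real.exp (-a * s))
      = (∫ s in Ioc (0:ℝ) t, t ^ α * Real.exp (-a * s))
        - ∫ s in Ioc (0:ℝ) t, (t - s) ^ α * Real.exp (-a * s) := by
    rw [← integral_sub hC hG]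
    congr 1 with s
    ring
  rw [hsub, MeasureTheory.integral_const_mul, integral_exp_Ioc ha ht.le]
  field_simp
  ring

lemma pointwise_bound {α a : ℝ} (hα1 : -1 < α) (hα2 : α ≤ 1) (ha : 0 < a) {t : ℝ} (ht : 1 ≤ t) :
    |t ^ α - a * ∫ s in Ioc (0:ℝ) t, (t - s) ^ α * Real.exp (-a * s)|
      ≤ (a * |α| * 2 ^ (1 - α) * ∫ s in Ioi (0:ℝ), s * Real.exp (-a * s)) * t ^ (α - 1)
        + ((a * (1 + 1 / (α + 1)) + 1) * (64 / a ^ 2)) * Real.exp (-(a / 4) * t) := by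
  set J := ∫ s in Ioi (0:ℝ), s * Real.exp (-a * s) with hJdef
  have ht0 : (0:ℝ) < t := by linarith
  have h2 : (0:ℝ) < t / 2 := by linarith
  have hα1' : (0:ℝ) < α + 1 := by linarith
  have hG : IntegrableOn (fun s => (t - s) ^ α * Real.exp (-a * s)) (Ioc (0:ℝ) t) :=
    integrableOn_rpow_sub_exp hα1 le_rfl ha.le ht0.le
  have hC : IntegrableOn (fun s => t ^ α * Real.exp (-a * s)) (Ioc (0:ℝ) t) :=
    integrableOn_const_exp
  have hDeq : (fun s : ℝ => (t ^ α - (t - s) ^ α) * Real.exp (-a * s))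
      = fun s => t ^ α * Real.exp (-a * s) - (t - s) ^ α * Real.exp (-a * s) := by
    funext s; ring
  have hD : IntegrableOn (fun s => (t ^ α - (t - s) ^ α) * Real.exp (-a * s)) (Ioc (0:ℝ) t) := by
    rw [hDeq]; exact hC.sub hG
  have hDabs : IntegrableOn
      (fun s => |(t ^ α - (t - s) ^ α) * Real.exp (-a * s)|) (Ioc (0:ℝ) t) := hD.abs
  have hsub1 : Ioc (0:ℝ) (t/2) ⊆ Ioc (0:ℝ) t := Ioc_subset_Ioc_right (by linarith)
  have hsub2 : Ioc (t/2) t ⊆ Ioc (0:ℝ) t := Ioc_subset_Ioc_left h2.le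
  have hun : Ioc (0:ℝ) (t/2) ∪ Ioc (t/2) t = Ioc (0:ℝ) t :=
    Ioc_union_Ioc_eq_Ioc h2.le (by linarith)
  have hsplit : (∫ s in Ioc (0:ℝ) t, |(t ^ α - (t - s) ^ α) * Real.exp (-a * s)|)
      = (∫ s in Ioc (0:ℝ) (t/2), |(t ^ α - (t - s) ^ α) * Real.exp (-a * s)|)
        + ∫ s in Ioc (t/2) t, |(t ^ α - (t - s) ^ α) * Real.exp (-a * s)| := by
    rw [← hun, setIntegral_union (Ioc_disjoint_Ioc_of_le le_rfl) measurableSet_Ioc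
      (hDabs.mono_set hsub1) (hDabs.mono_set hsub2)]
  -- region A bound
  have hJnonneg : 0 ≤ J := by
    rw [hJdef]
    apply setIntegral_nonneg measurableSet_Ioi
    intro s hs
    have : (0:ℝ) < s := hs
    positivity
  have hCA : (0:ℝ) ≤ |α| * (t / 2) ^ (α - 1) :=
    mul_nonneg (abs_nonneg _) (Real.rpow_nonneg h2.le _)
  have hA : (∫ s in Ioc (0:ℝ) (t/2), |(t ^ α - (t - s) ^ α) * Real.exp (-a * s)|)
      ≤ |α| * (t / 2) ^ (α - 1) * J := by
    calc (∫ s in Ioc (0:ℝ) (t/2), |(t ^ α - (t - s) ^ α) * Real.exp (-a * s)|)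
        ≤ ∫ s in Ioc (0:ℝ) (t/2), |α| * (t / 2) ^ (α - 1) * (s * Real.exp (-a * s)) := by
          refine setIntegral_mono_on (hDabs.mono_set hsub1)
            ((((integrable_id_exp ha).mono_set Ioc_subset_Ioi_self)).const_mul _)
            measurableSet_Ioc ?_
          intro s hs
          rw [abs_mul, abs_of_nonneg (Real.exp_nonneg _)]
          calc |t ^ α - (t - s) ^ α| * Real.exp (-a * s)
              ≤ (|α| * (t / 2) ^ (α - 1) * s) * Real.exp (-a * s) :=
                mul_le_mul_of_nonneg_right (mvt_bound hα2 hs.1 hs.2) (Real.exp_nonneg _)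
          _ = |α| * (t / 2) ^ (α - 1) * (s * Real.exp (-a * s)) := by ring
    _ = |α| * (t / 2) ^ (α - 1) * ∫ s in Ioc (0:ℝ) (t/2), s * Real.exp (-a * s) :=
        MeasureTheory.integral_const_mul _ _
    _ ≤ |α| * (t / 2) ^ (α - 1) * J := by
        refine mul_le_mul_of_nonneg_left ?_ hCA
        rw [hJdef]
        refine setIntegral_mono_set (integrable_id_exp ha) ?_
          (HasSubset.Subset.eventuallyLE Ioc_subset_Ioi_self)
        filter_upwards [ae_restrict_mem measurableSet_Ioi] with s hs
        have : (0:ℝ) < s := hs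
        positivity
  -- region B bound
  have hBptwise : ∀ s ∈ Ioc (t/2) t, |(t ^ α - (t - s) ^ α) * Real.exp (-a * s)|
      ≤ (t ^ α + (t - s) ^ α) * Real.exp (-(a/2) * t) := by
    intro s hs
    have hts : (0:ℝ) ≤ t - s := by linarith [hs.2]
    rw [abs_mul, abs_of_nonneg (Real.exp_nonneg _)]
    have h1 : |t ^ α - (t - s) ^ α| ≤ t ^ α + (t - s) ^ α := by
      have := abs_sub_abs_le_abs_sub (t ^ α) ((t - s) ^ α)
      have h1a := abs_sub (t ^ α) ((t - s) ^ α)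
      calc |t ^ α - (t - s) ^ α| ≤ |t ^ α| + |(t - s) ^ α| := abs_sub _ _
      _ = t ^ α + (t - s) ^ α := by
          rw [abs_of_nonneg (Real.rpow_nonneg ht0.le _),
            abs_of_nonneg (Real.rpow_nonneg hts _)]
    have h2e : Real.exp (-a * s) ≤ Real.exp (-(a/2) * t) := by
      apply Real.exp_le_exp.mpr
      nlinarith [hs.1]
    calc |t ^ α - (t - s) ^ α| * Real.exp (-a * s)
        ≤ (t ^ α + (t - s) ^ α) * Real.exp (-a * s) :=
          mul_le_mul_of_nonneg_right h1 (Real.exp_nonneg _)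
    _ ≤ (t ^ α + (t - s) ^ α) * Real.exp (-(a/2) * t) := by
        refine mul_le_mul_of_nonneg_left h2e ?_
        positivity
  have hBint : IntegrableOn (fun s => (t ^ α + (t - s) ^ α) * Real.exp (-(a/2) * t))
      (Ioc (t/2) t) := by
    apply Integrable.mul_const
    exact (integrableOn_const measure_Ioc_lt_top.ne).add
      (integrableOn_rpow_sub hα1 (by linarith))
  have hB : (∫ s in Ioc (t/2) t, |(t ^ α - (t - s) ^ α) * Real.exp (-a * s)|)
      ≤ (t/2 * t ^ α + (t/2) ^ (α + 1) / (α + 1)) * Real.exp (-(a/2) * t) := by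
    calc (∫ s in Ioc (t/2) t, |(t ^ α - (t - s) ^ α) * Real.exp (-a * s)|)
        ≤ ∫ s in Ioc (t/2) t, (t ^ α + (t - s) ^ α) * Real.exp (-(a/2) * t) :=
          setIntegral_mono_on (hDabs.mono_set hsub2) hBint measurableSet_Ioc hBptwise
    _ = (∫ s in Ioc (t/2) t, (t ^ α + (t - s) ^ α)) * Real.exp (-(a/2) * t) :=
        MeasureTheory.integral_mul_const _ _
    _ = (t/2 * t ^ α + (t/2) ^ (α + 1) / (α + 1)) * Real.exp (-(a/2) * t) := by
        congr 1
        rw [integral_add (integrableOn_const (C := t ^ α) measure_Ioc_lt_top.ne)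
          (integrableOn_rpow_sub hα1 (by linarith))]
        rw [setIntegral_const, integral_rpow_sub hα1 (by linarith)]
        rw [measureReal_def, Real.volume_Ioc, smul_eq_mul, ENNReal.toReal_ofReal (by linarith)]
        have : t - t/2 = t/2 := by ring
        rw [this]
  -- numeric estimates
  have htα : t ^ α ≤ t := by
    calc t ^ α ≤ t ^ (1:ℝ) := Real.rpow_le_rpow_of_exponent_le ht hα2
    _ = t := Real.rpow_one t
  have htα0 : 0 ≤ t ^ α := Real.rpow_nonneg ht0.le _
  have hsq : t ^ 2 * Real.exp (-(a/2) * t) ≤ 64 / a ^ 2 * Real.exp (-(a/4) * t) := by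
    have h1 := sq_le_exp (x := a * t / 4) (by positivity)
    have ht2 : t ^ 2 ≤ 64 / a ^ 2 * Real.exp (a * t / 4) := by
      rw [div_mul_eq_mul_div, le_div_iff₀ (by positivity : (0:ℝ) < a ^ 2)]
      nlinarith
    have hexp : Real.exp (a * t / 4) * Real.exp (-(a/2) * t) = Real.exp (-(a/4) * t) := by
      rw [← Real.exp_add]; ring_nf
    calc t ^ 2 * Real.exp (-(a/2) * t)
        ≤ (64 / a ^ 2 * Real.exp (a * t / 4)) * Real.exp (-(a/2) * t) :=
          mul_le_mul_of_nonneg_right ht2 (Real.exp_nonneg _)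
    _ = 64 / a ^ 2 * Real.exp (-(a/4) * t) := by rw [mul_assoc, hexp]
  have hBval : (t/2 * t ^ α + (t/2) ^ (α + 1) / (α + 1)) * Real.exp (-(a/2) * t)
      ≤ (1 + 1 / (α + 1)) * (64 / a ^ 2) * Real.exp (-(a/4) * t) := by
    have hb1 : t/2 * t ^ α ≤ t ^ 2 := by nlinarith
    have hb2 : (t/2) ^ (α + 1) ≤ t ^ 2 := by
      calc (t/2) ^ (α + 1) ≤ t ^ (α + 1) :=
            Real.rpow_le_rpow h2.le (by linarith) hα1'.le
      _ = t ^ α * t := by rw [Real.rpow_add ht0, Real.rpow_one]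
      _ ≤ t * t := mul_le_mul_of_nonneg_right htα ht0.le
      _ = t ^ 2 := by ring
    have hb3 : (t/2) ^ (α + 1) / (α + 1) ≤ t ^ 2 / (α + 1) := by gcongr
    have hsum : t/2 * t ^ α + (t/2) ^ (α + 1) / (α + 1) ≤ (1 + 1 / (α + 1)) * t ^ 2 := by
      have hrw : (1 + 1 / (α + 1)) * t ^ 2 = t ^ 2 + t ^ 2 / (α + 1) := by
        field_simp
      linarith
    have hcoef : (0:ℝ) ≤ 1 + 1 / (α + 1) := by
      have := one_div_pos.mpr hα1'
      linarith
    calc (t/2 * t ^ α + (t/2) ^ (α + 1) / (α + 1)) * Real.exp (-(a/2) * t)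
        ≤ ((1 + 1 / (α + 1)) * t ^ 2) * Real.exp (-(a/2) * t) :=
          mul_le_mul_of_nonneg_right hsum (Real.exp_nonneg _)
    _ = (1 + 1 / (α + 1)) * (t ^ 2 * Real.exp (-(a/2) * t)) := by ring
    _ ≤ (1 + 1 / (α + 1)) * (64 / a ^ 2 * Real.exp (-(a/4) * t)) :=
        mul_le_mul_of_nonneg_left hsq hcoef
    _ = (1 + 1 / (α + 1)) * (64 / a ^ 2) * Real.exp (-(a/4) * t) := by ring
  have htail : t ^ α * Real.exp (-a * t) ≤ 64 / a ^ 2 * Real.exp (-(a/4) * t) := by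
    have e : Real.exp (-a * t) ≤ Real.exp (-(a/2) * t) := Real.exp_le_exp.mpr (by nlinarith)
    have ht2 : t ^ α ≤ t ^ 2 := by nlinarith
    have h1 : t ^ α * Real.exp (-a * t) ≤ t ^ 2 * Real.exp (-(a/2) * t) :=
      mul_le_mul ht2 e (Real.exp_nonneg _) (by nlinarith)
    linarith
  -- put everything together
  have hIbound : |∫ s in Ioc (0:ℝ) t, (t ^ α - (t - s) ^ α) * Real.exp (-a * s)|
      ≤ |α| * (t / 2) ^ (α - 1) * J
        + (t/2 * t ^ α + (t/2) ^ (α + 1) / (α + 1)) * Real.exp (-(a/2) * t) := by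
    calc |∫ s in Ioc (0:ℝ) t, (t ^ α - (t - s) ^ α) * Real.exp (-a * s)|
        ≤ ∫ s in Ioc (0:ℝ) t, |(t ^ α - (t - s) ^ α) * Real.exp (-a * s)| := by
          simpa only [Real.norm_eq_abs] using
            norm_integral_le_integral_norm
              (μ := volume.restrict (Ioc (0:ℝ) t))
              (fun s => (t ^ α - (t - s) ^ α) * Real.exp (-a * s))
    _ = _ + _ := hsplit
    _ ≤ _ := add_le_add hA hB
  have hhalf : (t/2) ^ (α - 1) = t ^ (α - 1) * 2 ^ (1 - α) := by
    rw [Real.div_rpow ht0.le (by norm_num : (0:ℝ) ≤ 2), div_eq_mul_inv,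
      ← Real.rpow_neg (by norm_num : (0:ℝ) ≤ 2), neg_sub]
  have h5 : a * ((t/2 * t ^ α + (t/2) ^ (α + 1) / (α + 1)) * Real.exp (-(a/2) * t))
      ≤ a * ((1 + 1 / (α + 1)) * (64 / a ^ 2) * Real.exp (-(a/4) * t)) :=
    mul_le_mul_of_nonneg_left hBval ha.le
  calc |t ^ α - a * ∫ s in Ioc (0:ℝ) t, (t - s) ^ α * Real.exp (-a * s)|
      = |a * (∫ s in Ioc (0:ℝ) t, (t ^ α - (t - s) ^ α) * Real.exp (-a * s))
          + t ^ α * Real.exp (-a * t)| := by rw [decomposition hα1 ha ht0]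
  _ ≤ |a * (∫ s in Ioc (0:ℝ) t, (t ^ α - (t - s) ^ α) * Real.exp (-a * s))|
        + |t ^ α * Real.exp (-a * t)| := abs_add_le _ _
  _ = a * |∫ s in Ioc (0:ℝ) t, (t ^ α - (t - s) ^ α) * Real.exp (-a * s)|
        + t ^ α * Real.exp (-a * t) := by
      rw [abs_mul, abs_of_nonneg ha.le,
        abs_of_nonneg (mul_nonneg htα0 (Real.exp_nonneg _))]
  _ ≤ a * (|α| * (t / 2) ^ (α - 1) * J
        + (t/2 * t ^ α + (t/2) ^ (α + 1) / (α + 1)) * Real.exp (-(a/2) * t))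
        + t ^ α * Real.exp (-a * t) := by
      have := mul_le_mul_of_nonneg_left hIbound ha.le
      linarith
  _ = (a * |α| * 2 ^ (1 - α) * J) * t ^ (α - 1)
        + (a * ((t/2 * t ^ α + (t/2) ^ (α + 1) / (α + 1)) * Real.exp (-(a/2) * t))
          + t ^ α * Real.exp (-a * t)) := by
      rw [hhalf]; ring
  _ ≤ (a * |α| * 2 ^ (1 - α) * J) * t ^ (α - 1)
        + (a * ((1 + 1 / (α + 1)) * (64 / a ^ 2) * Real.exp (-(a/4) * t))
          + 64 / a ^ 2 * Real.exp (-(a/4) * t)) := by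
      linarith
  _ = (a * |α| * 2 ^ (1 - α) * J) * t ^ (α - 1)
        + ((a * (1 + 1 / (α + 1)) + 1) * (64 / a ^ 2)) * Real.exp (-(a/4) * t) := by
      ring

end KernelSq

open KernelSq

/-- The fractional kernel with `H ∈ (0,1)` is square integrable on `(0, ∞)`. -/
theorem kernel_square_integrable (H a : ℝ) (hH : H ∈ Set.Ioo (0 : ℝ) 1) (ha : 0 < a)
    (K : ℝ → ℝ)
    (hK : ∀ t : ℝ, 0 < t → K t = (1 / Real.Gamma (H + 1/2)) *
      (t ^ (H - 1/2) - a * ∫ s in Set.Ioc (0:ℝ) t, (t - s) ^ (H - 1/2) * Real.exp (-a * s))) :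
    MeasureTheory.IntegrableOn (fun t => K t ^ 2) (Set.Ioi (0 : ℝ)) := by
  obtain ⟨hH0, hH1⟩ := hH
  set α : ℝ := H - 1/2 with hαdef
  set c : ℝ := 1 / Real.Gamma (H + 1/2) with hcdef
  have hα1 : (-1:ℝ) < α := by rw [hαdef]; linarith
  have hα2 : α ≤ 1 := by rw [hαdef]; linarith
  have hα3 : (-1:ℝ) < 2 * α := by rw [hαdef]; linarith
  have hα4 : 2 * α - 2 < -1 := by rw [hαdef]; linarith
  have hα1' : (0:ℝ) < α + 1 := by linarith
  have hc : 0 < c := by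
    rw [hcdef]
    exact one_div_pos.mpr (Real.Gamma_pos_of_pos (by linarith))
  set Kt : ℝ → ℝ := fun t =>
    c * (t ^ α - a * ∫ s in Set.Ioc (0:ℝ) t, (t - s) ^ α * Real.exp (-a * s)) with hKtdef
  have hKt_meas : Measurable Kt := by
    have h1 : Measurable fun t : ℝ => t ^ α := by fun_prop
    exact ((h1.sub ((measurable_F α a).const_mul a)).const_mul c)
  have hKtsq_meas : AEStronglyMeasurable (fun t => Kt t ^ 2) (volume.restrict (Set.Ioi (0:ℝ))) :=
    ((hKt_meas.pow_const 2).aestronglyMeasurable)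
  have hmain : IntegrableOn (fun t => Kt t ^ 2) (Set.Ioi (0:ℝ)) := by
    rw [← Ioc_union_Ioi_eq_Ioi (zero_le_one (α := ℝ))]
    refine IntegrableOn.union ?_ ?_
    · -- on Ioc 0 1
      refine Integrable.mono'
        (g := fun t => 2 * c ^ 2 * t ^ (2 * α) + 2 * c ^ 2 * (a / (α + 1)) ^ 2) ?_ ?_ ?_
      · refine Integrable.add ?_ ?_
        · exact ((intervalIntegrable_iff_integrableOn_Ioc_of_le zero_le_one).mp
            (intervalIntegrable_rpow' hα3)).const_mul _
        · exact (integrableOn_const (C := (a / (α + 1)) ^ 2) (s := Ioc (0:ℝ) 1) (μ := volume) measure_Ioc_lt_top.ne).integrable.const_mul _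
      · exact (hKt_meas.pow_const 2).aestronglyMeasurable
      · filter_upwards [ae_restrict_mem measurableSet_Ioc] with t htm
        have ht0 : 0 < t := htm.1
        have hF0 : 0 ≤ ∫ s in Set.Ioc (0:ℝ) t, (t - s) ^ α * Real.exp (-a * s) := by
          apply setIntegral_nonneg measurableSet_Ioc
          intro s hs
          have : (0:ℝ) ≤ t - s := by linarith [hs.2]
          positivity
        have hFle : (∫ s in Set.Ioc (0:ℝ) t, (t - s) ^ α * Real.exp (-a * s))
            ≤ 1 / (α + 1) := by
          calc (∫ s in Set.Ioc (0:ℝ) t, (t - s) ^ α * Real.exp (-a * s))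
              ≤ ∫ s in Set.Ioc (0:ℝ) t, (t - s) ^ α := by
                refine setIntegral_mono_on
                  (integrableOn_rpow_sub_exp hα1 le_rfl ha.le ht0.le)
                  (integrableOn_rpow_sub hα1 ht0.le) measurableSet_Ioc ?_
                intro s hs
                have h1 : (0:ℝ) ≤ t - s := by linarith [hs.2]
                have h2 : Real.exp (-a * s) ≤ 1 := by
                  rw [Real.exp_le_one_iff]
                  nlinarith [hs.1]
                exact mul_le_of_le_one_right (Real.rpow_nonneg h1 α) h2
          _ = (t - 0) ^ (α + 1) / (α + 1) := integral_rpow_sub hα1 ht0.le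
          _ ≤ 1 / (α + 1) := by
              gcongr
              rw [sub_zero]
              exact Real.rpow_le_one ht0.le htm.2 hα1'.le
        have habs : |Kt t| ≤ c * (t ^ α + a / (α + 1)) := by
          rw [hKtdef]
          simp only
          rw [abs_mul, abs_of_pos hc]
          refine mul_le_mul_of_nonneg_left ?_ hc.le
          calc |t ^ α - a * ∫ s in Set.Ioc (0:ℝ) t, (t - s) ^ α * Real.exp (-a * s)|
              ≤ |t ^ α| + |a * ∫ s in Set.Ioc (0:ℝ) t, (t - s) ^ α * Real.exp (-a * s)| :=
                abs_sub _ _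
          _ ≤ t ^ α + a / (α + 1) := by
              rw [abs_of_nonneg (Real.rpow_nonneg ht0.le α), abs_mul, abs_of_pos ha,
                abs_of_nonneg hF0]
              have := mul_le_mul_of_nonneg_left hFle ha.le
              rw [mul_one_div] at this
              linarith
        have hsq : (t ^ α) * (t ^ α) = t ^ (2 * α) := by
          rw [← Real.rpow_add ht0]; ring_nf
        rw [Real.norm_eq_abs, abs_of_nonneg (sq_nonneg _), ← sq_abs]
        have h6 := pow_le_pow_left₀ (abs_nonneg (Kt t)) habs 2
        calc |Kt t| ^ 2 ≤ (c * (t ^ α + a / (α + 1))) ^ 2 := h6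
        _ ≤ 2 * c ^ 2 * t ^ (2 * α) + 2 * c ^ 2 * (a / (α + 1)) ^ 2 := by
            nlinarith [sq_nonneg (t ^ α - a / (α + 1)), sq_nonneg c,
              Real.rpow_nonneg ht0.le α]
    · -- on Ioi 1
      set J : ℝ := ∫ s in Set.Ioi (0:ℝ), s * Real.exp (-a * s) with hJdef
      set C1 : ℝ := c * (a * |α| * 2 ^ (1 - α) * J) with hC1def
      set C2 : ℝ := c * ((a * (1 + 1 / (α + 1)) + 1) * (64 / a ^ 2)) with hC2def
      refine Integrable.mono'
        (g := fun t => 2 * C1 ^ 2 * t ^ (2 * α - 2) + 2 * C2 ^ 2 * Real.exp (-(a/2) * t)) ?_ ?_ ?_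
      · refine Integrable.add ?_ ?_
        · exact (integrableOn_Ioi_rpow_of_lt hα4 zero_lt_one).const_mul _
        · exact (exp_neg_integrableOn_Ioi 1 (half_pos ha)).const_mul _
      · exact (hKt_meas.pow_const 2).aestronglyMeasurable
      · filter_upwards [ae_restrict_mem measurableSet_Ioi] with t htm
        have ht1 : (1:ℝ) ≤ t := le_of_lt htm
        have ht0 : (0:ℝ) < t := by linarith
        have hb := pointwise_bound hα1 hα2 ha ht1
        have habs : |Kt t| ≤ C1 * t ^ (α - 1) + C2 * Real.exp (-(a/4) * t) := by
          rw [hKtdef]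
          simp only
          rw [abs_mul, abs_of_pos hc]
          calc c * |t ^ α - a * ∫ s in Set.Ioc (0:ℝ) t, (t - s) ^ α * Real.exp (-a * s)|
              ≤ c * ((a * |α| * 2 ^ (1 - α) * J) * t ^ (α - 1)
                + ((a * (1 + 1 / (α + 1)) + 1) * (64 / a ^ 2)) * Real.exp (-(a/4) * t)) :=
                mul_le_mul_of_nonneg_left hb hc.le
          _ = C1 * t ^ (α - 1) + C2 * Real.exp (-(a/4) * t) := by
              rw [hC1def, hC2def]; ring
        have hx2 : (t ^ (α - 1)) * (t ^ (α - 1)) = t ^ (2 * α - 2) := by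
          rw [← Real.rpow_add ht0]; ring_nf
        have hy2 : (Real.exp (-(a/4) * t)) * (Real.exp (-(a/4) * t))
            = Real.exp (-(a/2) * t) := by
          rw [← Real.exp_add]; ring_nf
        rw [Real.norm_eq_abs, abs_of_nonneg (sq_nonneg _), ← sq_abs]
        have h6 := pow_le_pow_left₀ (abs_nonneg (Kt t)) habs 2
        calc |Kt t| ^ 2 ≤ (C1 * t ^ (α - 1) + C2 * Real.exp (-(a/4) * t)) ^ 2 := h6
        _ ≤ 2 * C1 ^ 2 * t ^ (2 * α - 2) + 2 * C2 ^ 2 * Real.exp (-(a/2) * t) := by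
            nlinarith [sq_nonneg (C1 * t ^ (α - 1) - C2 * Real.exp (-(a/4) * t))]
  refine hmain.congr_fun ?_ measurableSet_Ioi
  intro t htm
  have ht0 : (0:ℝ) < t := htm
  show Kt t ^ 2 = K t ^ 2
  rw [hK t ht0, hKtdef]
end
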